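/- The quaternionic exponential function exp : ℍ → ℍ, exp z = ∑_{n=0}^∞ z^n/n!, is H-differentiable at every point z ∈ ℍ with H-derivative exp z. -/

import Mathlib

open scoped Quaternion
open Filter Topology

/-- A function `f : ℍ → ℍ` is H-differentiable at `z₀` with H-derivative `d` if there exist
sequences of quaternions `A, B` with `∑ ‖A k‖ * ‖B k‖ < ∞` such that
`f (z₀ + h) - f z₀ = ∑' k, A k * h * B k + ω h` with `‖ω h‖ / ‖h‖ → 0` as `h → 0`,
and `d = ∑' k, A k * B k`. -/
def HDiffAt (f : ℍ[ℝ] → ℍ[ℝ]) (z₀ d : ℍ[ℝ]) : Prop :=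
  ∃ A B : ℕ → ℍ[ℝ],
    (Summable fun k => ‖A k‖ * ‖B k‖) ∧
    Filter.Tendsto
      (fun h : ℍ[ℝ] => ‖f (z₀ + h) - f z₀ - ∑' k, A k * h * B k‖ / ‖h‖)
      (𝓝[≠] (0 : ℍ[ℝ])) (𝓝 0) ∧
    d = ∑' k, A k * B k

/-- The quaternionic exponential, defined by its power series. -/
noncomputable def qexp (z : ℍ[ℝ]) : ℍ[ℝ] := ∑' n : ℕ, ((n.factorial : ℝ)⁻¹) • z ^ n

noncomputable section

/-- The Fréchet derivative of `y ↦ y ^ n` at `x` in a noncommutative algebra. -/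
def pden (n : ℕ) (x : ℍ[ℝ]) : ℍ[ℝ] →L[ℝ] ℍ[ℝ] :=
  ∑ i ∈ Finset.range n, ContinuousLinearMap.mulLeftRight ℝ ℍ[ℝ] (x ^ i) (x ^ (n - 1 - i))

lemma pden_apply (n : ℕ) (x h : ℍ[ℝ]) :
    pden n x h = ∑ i ∈ Finset.range n, x ^ i * h * x ^ (n - 1 - i) := by
  simp [pden, ContinuousLinearMap.sum_apply, ContinuousLinearMap.mulLeftRight_apply]

lemma hasFDerivAt_pow_q (n : ℕ) (x : ℍ[ℝ]) :
    HasFDerivAt (fun y : ℍ[ℝ] => y ^ n) (pden n x) x := by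
  induction n with
  | zero =>
      simpa [pden] using (hasFDerivAt_const (1 : ℍ[ℝ]) x)
  | succ n ih =>
      have h := ih.mul' (hasFDerivAt_id x)
      have heq : (x ^ n • ContinuousLinearMap.id ℝ ℍ[ℝ] +
          (pden n x).smulRight x) = pden (n+1) x := by
        refine ContinuousLinearMap.ext fun v => ?_
        simp only [ContinuousLinearMap.add_apply, ContinuousLinearMap.smul_apply,
          ContinuousLinearMap.id_apply, ContinuousLinearMap.smulRight_apply, smul_eq_mul,
          pden_apply]
        rw [Finset.sum_range_succ]
        have h1 : ∀ i ∈ Finset.range n, x ^ i * v * x ^ (n + 1 - 1 - i)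
            = x ^ i * v * x ^ (n - 1 - i) * x := by
          intro i hi
          rw [Finset.mem_range] at hi
          have : n + 1 - 1 - i = (n - 1 - i) + 1 := by omega
          rw [this, pow_succ, ← mul_assoc]
        rw [Finset.sum_congr rfl h1, ← Finset.sum_mul]
        have : n + 1 - 1 - n = 0 := by omega
        rw [this, pow_zero, mul_one, add_comm]
      rw [← heq]
      exact h.congr_of_eventuallyEq (by filter_upwards with y using (pow_succ y n).symm)

lemma pden_norm_le (n : ℕ) (x : ℍ[ℝ]) : ‖pden n x‖ ≤ n * ‖x‖ ^ (n - 1) := by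
  unfold pden
  refine le_trans (norm_sum_le (E := ℍ[ℝ] →L[ℝ] ℍ[ℝ]) _ _) ?_
  have h : ∀ i ∈ Finset.range n,
      ‖ContinuousLinearMap.mulLeftRight ℝ ℍ[ℝ] (x ^ i) (x ^ (n - 1 - i))‖ ≤ ‖x‖ ^ (n - 1) := by
    intro i hi
    rw [Finset.mem_range] at hi
    refine le_trans (ContinuousLinearMap.opNorm_mulLeftRight_apply_apply_le ℝ ℍ[ℝ] _ _) ?_
    rw [norm_pow, norm_pow, ← pow_add]
    have : i + (n - 1 - i) = n - 1 := by omega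
    rw [this]
  calc ∑ i ∈ Finset.range n,
        ‖ContinuousLinearMap.mulLeftRight ℝ ℍ[ℝ] (x ^ i) (x ^ (n - 1 - i))‖
      ≤ ∑ _i ∈ Finset.range n, ‖x‖ ^ (n - 1) := Finset.sum_le_sum h
    _ = n * ‖x‖ ^ (n - 1) := by simp [Finset.sum_const, nsmul_eq_mul]

end

noncomputable section

open Finset

lemma summable_master (z : ℍ[ℝ]) :
    Summable (fun p : ℕ × ℕ =>
      (((p.1 + p.2 + 1).factorial : ℝ))⁻¹ * (‖z‖ ^ p.1 * ‖z‖ ^ p.2)) := by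
  have hs : Summable (fun p : ℕ × ℕ =>
      (‖z‖ ^ p.1 / (p.1.factorial : ℝ)) * (‖z‖ ^ p.2 / (p.2.factorial : ℝ))) :=
    (Real.summable_pow_div_factorial ‖z‖).mul_of_nonneg
      (Real.summable_pow_div_factorial ‖z‖)
      (fun n => by positivity) (fun n => by positivity)
  refine Summable.of_nonneg_of_le (fun p => by positivity) (fun p => ?_) hs
  have h1 : (p.1.factorial * p.2.factorial : ℕ) ≤ (p.1 + p.2 + 1).factorial :=
    le_trans (Nat.le_of_dvd (Nat.factorial_pos _)
      (Nat.factorial_mul_factorial_dvd_factorial_add _ _))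
      (Nat.factorial_le (by omega))
  have h2 : (((p.1 + p.2 + 1).factorial : ℝ))⁻¹ ≤ ((p.1.factorial : ℝ) * p.2.factorial)⁻¹ := by
    apply inv_anti₀ (by positivity)
    exact_mod_cast h1
  calc (((p.1 + p.2 + 1).factorial : ℝ))⁻¹ * (‖z‖ ^ p.1 * ‖z‖ ^ p.2)
      ≤ ((p.1.factorial : ℝ) * p.2.factorial)⁻¹ * (‖z‖ ^ p.1 * ‖z‖ ^ p.2) := by
        apply mul_le_mul_of_nonneg_right h2 (by positivity)
    _ = (‖z‖ ^ p.1 / (p.1.factorial : ℝ)) * (‖z‖ ^ p.2 / (p.2.factorial : ℝ)) := by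
        rw [div_mul_div_comm, div_eq_mul_inv, mul_inv]
        ring

lemma tsum_pair (g : ℕ × ℕ → ℍ[ℝ]) (hg : Summable g) :
    ∑' k : ℕ, g (Nat.unpair k) = ∑' n : ℕ, ∑ i ∈ Finset.range (n + 1), g (i, n - i) := by
  have e1 : ∑' k : ℕ, g (Nat.unpair k) = ∑' p : ℕ × ℕ, g p :=
    Equiv.tsum_eq Nat.pairEquiv.symm g
  have hs : Summable (fun s : (Σ n : ℕ, Finset.HasAntidiagonal.antidiagonal n) => g s.2) :=
    Finset.HasAntidiagonal.sigmaAntidiagonalEquivProd.summable_iff.mpr hg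
  rw [e1, ← Finset.HasAntidiagonal.sigmaAntidiagonalEquivProd.tsum_eq g]
  have e2 : ∑' (c : Σ n : ℕ, Finset.HasAntidiagonal.antidiagonal n), g (Finset.HasAntidiagonal.sigmaAntidiagonalEquivProd c)
      = ∑' (c : Σ n : ℕ, Finset.HasAntidiagonal.antidiagonal n), g c.2 := rfl
  rw [e2, Summable.tsum_sigma' (fun n => (hasSum_fintype _).summable) hs]
  congr 1
  funext n
  rw [show ∑' (c : Finset.HasAntidiagonal.antidiagonal n), g (⟨n, c⟩ : Σ m : ℕ, Finset.HasAntidiagonal.antidiagonal m).2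
      = ∑' (c : Finset.HasAntidiagonal.antidiagonal n), g c from rfl]
  rw [Finset.tsum_subtype (Finset.HasAntidiagonal.antidiagonal n) g,
    Finset.Nat.sum_antidiagonal_eq_sum_range_succ_mk g]

end

set_option maxHeartbeats 2000000 in
/-- The quaternionic exponential is H-differentiable at every point with H-derivative itself. -/
theorem hDiffAt_qexp (z : ℍ[ℝ]) : HDiffAt qexp z (qexp z) := by
  classical
  set R : ℝ := ‖z‖ + 1 with hR
  have hu : Summable (fun n : ℕ => (n : ℝ) * R ^ (n - 1) / n.factorial) := by
    rw [← summable_nat_add_iff 1]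
    have e : (fun n : ℕ => (((n + 1 : ℕ) : ℝ)) * R ^ (n + 1 - 1) / ((n + 1).factorial : ℝ))
        = fun n : ℕ => R ^ n / (n.factorial : ℝ) := by
      funext n
      have hfac : (((n + 1).factorial : ℕ) : ℝ) = ((n : ℝ) + 1) * (n.factorial : ℝ) := by
        rw [Nat.factorial_succ]; push_cast; ring
      rw [Nat.add_sub_cancel, hfac]
      push_cast
      rw [mul_div_mul_left _ _ (by positivity : ((n : ℝ) + 1) ≠ 0)]
    rw [e]
    exact Real.summable_pow_div_factorial R
  have hderiv : ∀ (n : ℕ) (x : ℍ[ℝ]), x ∈ Metric.ball (0 : ℍ[ℝ]) R →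
      HasFDerivAt (fun y : ℍ[ℝ] => (n.factorial : ℝ)⁻¹ • y ^ n)
        ((n.factorial : ℝ)⁻¹ • pden n x) x :=
    fun n x _ => (hasFDerivAt_pow_q n x).const_smul ((n.factorial : ℝ)⁻¹)
  have hbound : ∀ (n : ℕ) (x : ℍ[ℝ]), x ∈ Metric.ball (0 : ℍ[ℝ]) R →
      ‖(n.factorial : ℝ)⁻¹ • pden n x‖ ≤ (n : ℝ) * R ^ (n - 1) / n.factorial := by
    intro n x hx
    rw [@norm_smul _ _ _ _ _ (NormedSpace.toNormSMulClass) ((n.factorial : ℝ)⁻¹) (pden n x), Real.norm_eq_abs,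
      abs_of_nonneg (by positivity)]
    have hxR : ‖x‖ ≤ R := (mem_ball_zero_iff.mp hx).le
    calc (n.factorial : ℝ)⁻¹ * ‖pden n x‖
        ≤ (n.factorial : ℝ)⁻¹ * ((n : ℝ) * ‖x‖ ^ (n - 1)) :=
          mul_le_mul_of_nonneg_left (pden_norm_le n x) (by positivity)
      _ ≤ (n.factorial : ℝ)⁻¹ * ((n : ℝ) * R ^ (n - 1)) := by
          refine mul_le_mul_of_nonneg_left ?_ (by positivity)
          exact mul_le_mul_of_nonneg_left
            (pow_le_pow_left₀ (norm_nonneg x) hxR _) (by positivity)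
      _ = (n : ℝ) * R ^ (n - 1) / n.factorial := by ring
  have hz : z ∈ Metric.ball (0 : ℍ[ℝ]) R := by
    rw [mem_ball_zero_iff, hR]
    linarith
  have hf0 : Summable (fun n : ℕ => (n.factorial : ℝ)⁻¹ • z ^ n) :=
    NormedSpace.expSeries_summable' (𝕂 := ℝ) z
  have hD : HasFDerivAt qexp (∑' n : ℕ, (n.factorial : ℝ)⁻¹ • pden n z) z := by
    exact hasFDerivAt_tsum_of_isPreconnected hu Metric.isOpen_ball
      (convex_ball (0 : ℍ[ℝ]) R).isPreconnected hderiv hbound hz hf0 hz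
  have hf'sum : Summable (fun n : ℕ => (n.factorial : ℝ)⁻¹ • pden n z) :=
    Summable.of_norm_bounded (E := ℍ[ℝ] →L[ℝ] ℍ[ℝ]) hu (fun n => hbound n z hz)
  set A : ℕ → ℍ[ℝ] :=
    fun k => (((k.unpair.1 + k.unpair.2 + 1).factorial : ℝ)⁻¹) • z ^ k.unpair.1 with hA
  set B : ℕ → ℍ[ℝ] := fun k => z ^ k.unpair.2 with hB
  have key : ∀ v : ℍ[ℝ],
      (∑' k : ℕ, A k * v * B k) = (∑' n : ℕ, (n.factorial : ℝ)⁻¹ • pden n z) v := by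
    intro v
    set g : ℕ × ℕ → ℍ[ℝ] :=
      fun p => (((p.1 + p.2 + 1).factorial : ℝ)⁻¹) • (z ^ p.1 * v * z ^ p.2) with hg
    have hgs : Summable g := by
      refine Summable.of_norm_bounded ((summable_master z).mul_right ‖v‖) fun p => ?_
      rw [hg]
      simp only
      rw [norm_smul ((((p.1 + p.2 + 1).factorial : ℝ))⁻¹) (z ^ p.1 * v * z ^ p.2),
        norm_mul, norm_mul, norm_pow, norm_pow, Real.norm_eq_abs,
        abs_of_nonneg (by positivity)]
      apply le_of_eq
      ring
    have e1 : ∑' k : ℕ, A k * v * B k = ∑' k : ℕ, g (Nat.unpair k) :=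
      tsum_congr fun k => by simp only [hA, hB, hg, smul_mul_assoc]
    have happly : (∑' n : ℕ, (n.factorial : ℝ)⁻¹ • pden n z) v
        = ∑' n : ℕ, ((n.factorial : ℝ)⁻¹ • pden n z) v :=
      ContinuousLinearMap.map_tsum (ContinuousLinearMap.apply ℝ ℍ[ℝ] v) hf'sum
    have hsum2 : Summable (fun n : ℕ => ((n.factorial : ℝ)⁻¹ • pden n z) v) :=
      hf'sum.map (ContinuousLinearMap.apply ℝ ℍ[ℝ] v)
        (ContinuousLinearMap.apply ℝ ℍ[ℝ] v).continuous
    rw [e1, tsum_pair g hgs, happly, hsum2.tsum_eq_zero_add]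
    have h0 : (((0 : ℕ).factorial : ℝ)⁻¹ • pden 0 z) v = 0 := by
      rw [ContinuousLinearMap.smul_apply]
      simp [pden]
    rw [h0, zero_add]
    refine tsum_congr fun n => ?_
    rw [ContinuousLinearMap.smul_apply, pden_apply, Finset.smul_sum]
    refine Finset.sum_congr rfl fun i hi => ?_
    rw [Finset.mem_range] at hi
    have h1 : i + (n - i) = n := by omega
    have h2 : n + 1 - 1 - i = n - i := by omega
    rw [hg]
    simp only
    rw [h1, h2]
  refine ⟨A, B, ?_, ?_, ?_⟩
  · have e : (fun k : ℕ => ‖A k‖ * ‖B k‖) = fun k : ℕ =>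
        (((k.unpair.1 + k.unpair.2 + 1).factorial : ℝ))⁻¹ *
          (‖z‖ ^ k.unpair.1 * ‖z‖ ^ k.unpair.2) := by
      funext k
      simp only [hA, hB]
      rw [norm_smul ((((k.unpair.1 + k.unpair.2 + 1).factorial : ℝ))⁻¹) (z ^ k.unpair.1),
        norm_pow, norm_pow, Real.norm_eq_abs, abs_of_nonneg (by positivity), mul_assoc]
    rw [e]
    have h4 := Nat.pairEquiv.symm.summable_iff.mpr (summable_master z)
    have e4 : (fun p : ℕ × ℕ =>
        (((p.1 + p.2 + 1).factorial : ℝ))⁻¹ * (‖z‖ ^ p.1 * ‖z‖ ^ p.2)) ∘ ⇑Nat.pairEquiv.symm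
        = fun k : ℕ =>
        (((k.unpair.1 + k.unpair.2 + 1).factorial : ℝ))⁻¹ *
          (‖z‖ ^ k.unpair.1 * ‖z‖ ^ k.unpair.2) := by
      funext k
      simp [Nat.pairEquiv, Function.comp]
      rfl
    rwa [e4] at h4
  · have ht := hasFDerivAt_iff_tendsto.mp hD
    have h2 : Filter.Tendsto (fun h : ℍ[ℝ] => z + h) (𝓝 0) (𝓝 z) := by
      simpa using (continuous_add_left z).tendsto (0 : ℍ[ℝ])
    have h3 := ht.comp h2
    simp only [Function.comp_def, add_sub_cancel_left] at h3
    refine Filter.Tendsto.mono_left ?_ nhdsWithin_le_nhds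
    refine h3.congr fun v => ?_
    rw [div_eq_inv_mul, key v]
  · set g2 : ℕ × ℕ → ℍ[ℝ] :=
      fun p => (((p.1 + p.2 + 1).factorial : ℝ)⁻¹) • z ^ (p.1 + p.2) with hg2
    have hg2s : Summable g2 := by
      refine Summable.of_norm_bounded (summable_master z) fun p => ?_
      rw [hg2]
      simp only
      rw [norm_smul ((((p.1 + p.2 + 1).factorial : ℝ))⁻¹) (z ^ (p.1 + p.2)),
        norm_pow, Real.norm_eq_abs, abs_of_nonneg (by positivity), pow_add]
    have e1 : ∑' k : ℕ, A k * B k = ∑' k : ℕ, g2 (Nat.unpair k) :=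
      tsum_congr fun k => by
        simp only [hA, hB, hg2, smul_mul_assoc, ← pow_add]
    have e2 : ∀ n : ℕ, ∑ i ∈ Finset.range (n + 1), g2 (i, n - i)
        = (n.factorial : ℝ)⁻¹ • z ^ n := by
      intro n
      have hterm : ∀ i ∈ Finset.range (n + 1),
          g2 (i, n - i) = ((n + 1).factorial : ℝ)⁻¹ • z ^ n := by
        intro i hi
        rw [Finset.mem_range] at hi
        have h1 : i + (n - i) = n := by omega
        rw [hg2]
        simp only
        rw [h1]
      rw [Finset.sum_congr rfl hterm, Finset.sum_const, Finset.card_range,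
        ← Nat.cast_smul_eq_nsmul ℝ, smul_smul]
      congr 1
      have hfac : (((n + 1).factorial : ℕ) : ℝ) = ((n : ℝ) + 1) * (n.factorial : ℝ) := by
        rw [Nat.factorial_succ]; push_cast; ring
      rw [hfac]
      push_cast
      rw [mul_inv, ← mul_assoc, mul_inv_cancel₀ (by positivity : ((n : ℝ) + 1) ≠ 0), one_mul]
    rw [e1, tsum_pair g2 hg2s, tsum_congr e2]
    rfl
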